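/- Let (A,μ,α,β) be a BiHom-associative superalgebra with α and β bijective, and let R be a Rota-Baxter operator of weight λ ∈ K on (A,μ,α,β). Define the supercommutator bracket [x,y] = μ(x,y) − (−1)^{|x||y|} μ(α⁻¹β(y), αβ⁻¹(x)) for homogeneous x,y. Then (A,[·,·],α,β) is a BiHom-Lie superalgebra and R is a Rota-Baxter operator of weight λ on it, i.e. [R(x),R(y)] = R([R(x),y] + [x,R(y)] + λ[x,y]) for all homogeneous x,y. -/

import Mathlib

lemma aux_symm_mem {K A : Type} [Field K] [AddCommGroup A] [Module K A]
    (𝒜 : ZMod 2 → Submodule K A) (hA : DirectSum.IsInternal 𝒜)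
    (e : A ≃ₗ[K] A) (he : ∀ i : ZMod 2, ∀ a ∈ 𝒜 i, e a ∈ 𝒜 i) :
    ∀ i : ZMod 2, ∀ a ∈ 𝒜 i, e.symm a ∈ 𝒜 i := by
  have hdisj : Disjoint (𝒜 0) (𝒜 1) :=
    hA.submodule_iSupIndep.pairwiseDisjoint (by decide)
  have htop : ∀ b : A, ∃ b0 ∈ 𝒜 0, ∃ b1 ∈ 𝒜 1, b = b0 + b1 := by
    intro b
    have hb : b ∈ (⨆ i, 𝒜 i) := by rw [hA.submodule_iSup_eq_top]; trivial
    have hle : (⨆ i, 𝒜 i) ≤ 𝒜 0 ⊔ 𝒜 1 := by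
      apply iSup_le; intro i; fin_cases i
      · exact le_sup_left
      · exact le_sup_right
    obtain ⟨b0, hb0, b1, hb1, hsum⟩ := Submodule.mem_sup.mp (hle hb)
    exact ⟨b0, hb0, b1, hb1, hsum.symm⟩
  intro i a ha
  obtain ⟨b0, hb0, b1, hb1, hsum⟩ := htop (e.symm a)
  have hea : e (e.symm a) = a := e.apply_symm_apply a
  fin_cases i
  · have h1 : e b1 = 0 := by
      have hmem : e b1 ∈ 𝒜 0 := by
        have : e b1 = a - e b0 := by rw [← hea, hsum, map_add]; abel
        rw [this]; exact sub_mem ha (he 0 b0 hb0)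
      exact (Submodule.disjoint_def.mp hdisj _ hmem (he 1 b1 hb1))
    have hb1z : b1 = 0 := by
      have := congrArg e.symm h1; simpa using this
    rw [hsum, hb1z, add_zero]; exact hb0
  · have h0 : e b0 = 0 := by
      have hmem : e b0 ∈ 𝒜 1 := by
        have : e b0 = a - e b1 := by rw [← hea, hsum, map_add]; abel
        rw [this]; exact sub_mem ha (he 1 b1 hb1)
      exact (Submodule.disjoint_def.mp hdisj.symm _ hmem (he 0 b0 hb0))
    have hb0z : b0 = 0 := by
      have := congrArg e.symm h0; simpa using this
    rw [hsum, hb0z, zero_add]; exact hb1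


/-!
STATEMENT 0: If `(A,μ,α,β)` is a BiHom-associative superalgebra with `α, β` bijective and
`R` is a Rota-Baxter operator of weight `λ` on it, then the supercommutator bracket
`[x,y] = μ(x,y) − (−1)^{|x||y|} μ(α⁻¹β(y), αβ⁻¹(x))` makes `(A,[·,·],α,β)` a BiHom-Lie
superalgebra and `R` is a Rota-Baxter operator of weight `λ` on it.
-/
theorem statement0
    (K : Type) [Field K] [CharZero K]
    (A : Type) [AddCommGroup A] [Module K A]
    (𝒜 : ZMod 2 → Submodule K A)
    (hA : DirectSum.IsInternal 𝒜)
    (μ : A →ₗ[K] A →ₗ[K] A)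
    (α β : A ≃ₗ[K] A)
    (hcomm : ∀ a, α (β a) = β (α a))
    (hαe : ∀ i : ZMod 2, ∀ a ∈ 𝒜 i, α a ∈ 𝒜 i)
    (hβe : ∀ i : ZMod 2, ∀ a ∈ 𝒜 i, β a ∈ 𝒜 i)
    (hμe : ∀ i j : ZMod 2, ∀ a ∈ 𝒜 i, ∀ b ∈ 𝒜 j, μ a b ∈ 𝒜 (i + j))
    (hαm : ∀ a b : A, α (μ a b) = μ (α a) (α b))
    (hβm : ∀ a b : A, β (μ a b) = μ (β a) (β b))
    (hass : ∀ a b c : A, μ (α a) (μ b c) = μ (μ a b) (β c))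
    (lam : K)
    (R : A →ₗ[K] A)
    (hRe : ∀ i : ZMod 2, ∀ a ∈ 𝒜 i, R a ∈ 𝒜 i)
    (hRα : ∀ a, R (α a) = α (R a))
    (hRβ : ∀ a, R (β a) = β (R a))
    (hRB : ∀ i j : ZMod 2, ∀ x ∈ 𝒜 i, ∀ y ∈ 𝒜 j,
      μ (R x) (R y) = R (μ (R x) y + μ x (R y) + lam • μ x y))
    -- the supercommutator bracket (given by its value on homogeneous elements of
    -- parities `i`, `j`)
    (br : ZMod 2 → ZMod 2 → A → A → A)
    (hbr : ∀ i j x y, br i j x y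
      = μ x y - ((-1 : K) ^ (i.val * j.val)) • μ (α.symm (β y)) (α (β.symm x))) :
    -- the bracket is even
    (∀ i j : ZMod 2, ∀ x ∈ 𝒜 i, ∀ y ∈ 𝒜 j, br i j x y ∈ 𝒜 (i + j))
    -- α and β are multiplicative for the bracket
    ∧ (∀ i j : ZMod 2, ∀ x ∈ 𝒜 i, ∀ y ∈ 𝒜 j, α (br i j x y) = br i j (α x) (α y))
    ∧ (∀ i j : ZMod 2, ∀ x ∈ 𝒜 i, ∀ y ∈ 𝒜 j, β (br i j x y) = br i j (β x) (β y))
    -- BiHom super skew-symmetry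
    ∧ (∀ i j : ZMod 2, ∀ x ∈ 𝒜 i, ∀ y ∈ 𝒜 j,
        br i j (β x) (α y) = -(((-1 : K) ^ (i.val * j.val)) • br j i (β y) (α x)))
    -- BiHom super-Jacobi identity
    ∧ (∀ i j k : ZMod 2, ∀ x ∈ 𝒜 i, ∀ y ∈ 𝒜 j, ∀ z ∈ 𝒜 k,
        ((-1 : K) ^ (i.val * k.val)) • br i (j + k) (β (β x)) (br j k (β y) (α z))
        + ((-1 : K) ^ (j.val * i.val)) • br j (k + i) (β (β y)) (br k i (β z) (α x))
        + ((-1 : K) ^ (k.val * j.val)) • br k (i + j) (β (β z)) (br i j (β x) (α y)) = 0)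
    -- R is a Rota-Baxter operator of weight lam on the bracket
    ∧ (∀ i j : ZMod 2, ∀ x ∈ 𝒜 i, ∀ y ∈ 𝒜 j,
        br i j (R x) (R y)
          = R (br i j (R x) y + br i j x (R y) + lam • br i j x y)) := by
  have hba : ∀ v, β (α v) = α (β v) := fun v => (hcomm v).symm
  have hbsa : ∀ v, β.symm (α v) = α (β.symm v) := fun v => by
    apply β.injective; rw [β.apply_symm_apply, ← hcomm, β.apply_symm_apply]
  have hbas : ∀ v, β (α.symm v) = α.symm (β v) := fun v => by
    apply α.injective; rw [α.apply_symm_apply, hcomm, α.apply_symm_apply]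
  have hbsas : ∀ v, β.symm (α.symm v) = α.symm (β.symm v) := fun v => by
    apply β.injective; rw [β.apply_symm_apply, hbas, β.apply_symm_apply]
  have hαsm : ∀ a b : A, α.symm (μ a b) = μ (α.symm a) (α.symm b) := fun a b => by
    apply α.injective; rw [α.apply_symm_apply, hαm, α.apply_symm_apply, α.apply_symm_apply]
  have hβsm : ∀ a b : A, β.symm (μ a b) = μ (β.symm a) (β.symm b) := fun a b => by
    apply β.injective; rw [β.apply_symm_apply, hβm, β.apply_symm_apply, β.apply_symm_apply]
  have hass' : ∀ a b c : A, μ a (μ b c) = μ (μ (α.symm a) b) (β c) := fun a b c => by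
    rw [← hass, α.apply_symm_apply]
  have hαse : ∀ i : ZMod 2, ∀ a ∈ 𝒜 i, α.symm a ∈ 𝒜 i := aux_symm_mem 𝒜 hA α hαe
  have hβse : ∀ i : ZMod 2, ∀ a ∈ 𝒜 i, β.symm a ∈ 𝒜 i := aux_symm_mem 𝒜 hA β hβe
  have hRαs : ∀ a, R (α.symm a) = α.symm (R a) := fun a => by
    apply α.injective; rw [α.apply_symm_apply, ← hRα, α.apply_symm_apply]
  have hRβs : ∀ a, R (β.symm a) = β.symm (R a) := fun a => by
    apply β.injective; rw [β.apply_symm_apply, ← hRβ, β.apply_symm_apply]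
  have hcases : ∀ m : ZMod 2, m = 0 ∨ m = 1 := by decide
  have v0 : (0 : ZMod 2).val = 0 := by decide
  have v1 : (1 : ZMod 2).val = 1 := by decide
  have a00 : ((0:ZMod 2)+0) = 0 := by decide
  have a01 : ((0:ZMod 2)+1) = 1 := by decide
  have a10 : ((1:ZMod 2)+0) = 1 := by decide
  have a11 : ((1:ZMod 2)+1) = 0 := by decide
  refine ⟨?mem, ?alpha, ?beta, ?skew, ?jacobi, ?rota⟩
  case mem =>
    intro i j x hx y hy
    rw [hbr]
    refine sub_mem (hμe i j x hx y hy) (Submodule.smul_mem _ _ ?_)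
    have := hμe j i _ (hαse j _ (hβe j y hy)) _ (hαe i _ (hβse i x hx))
    rwa [add_comm j i] at this
  case alpha =>
    intro i j x hx y hy
    simp only [hbr, map_sub, map_smul, hαm, hβm, hαsm, hβsm, hba, hbsa, hbas, hbsas,
      LinearEquiv.apply_symm_apply, LinearEquiv.symm_apply_apply]
  case beta =>
    intro i j x hx y hy
    simp only [hbr, map_sub, map_smul, hαm, hβm, hαsm, hβsm, hba, hbsa, hbas, hbsas,
      LinearEquiv.apply_symm_apply, LinearEquiv.symm_apply_apply]
  case skew =>
    intro i j x hx y hy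
    rcases hcases i with rfl | rfl <;> rcases hcases j with rfl | rfl <;>
      simp only [hbr, a00, a01, a10, a11, v0, v1, map_sub, map_smul, hαm, hβm, hαsm, hβsm, hba, hbsa, hbas, hbsas,
        LinearEquiv.apply_symm_apply, LinearEquiv.symm_apply_apply] <;>
      norm_num <;> module
  case jacobi =>
    intro i j k x hx y hy z hz
    rcases hcases i with rfl | rfl <;> rcases hcases j with rfl | rfl <;>
      rcases hcases k with rfl | rfl <;>
      simp only [a00, a01, a10, a11] <;> simp only [hbr, v0, v1] <;>
      norm_num <;>
      simp only [map_sub, map_add, map_smul, LinearMap.sub_apply, LinearMap.add_apply,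
        LinearMap.smul_apply, hαm, hβm, hαsm, hβsm, hass', hba, hbsa, hbas, hbsas,
        LinearEquiv.apply_symm_apply, LinearEquiv.symm_apply_apply, smul_sub, smul_add,
        one_smul, neg_smul, neg_sub, neg_neg, sub_neg_eq_add] <;>
      module
  case rota =>
    intro i j x hx y hy
    have hy' : α.symm (β y) ∈ 𝒜 j := hαse j _ (hβe j y hy)
    have hx' : α (β.symm x) ∈ 𝒜 i := hαe i _ (hβse i x hx)
    simp only [hbr, map_sub, map_add, map_smul,
      (fun a => (hRα a).symm : ∀ a, α (R a) = R (α a)),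
      (fun a => (hRβ a).symm : ∀ a, β (R a) = R (β a)),
      (fun a => (hRαs a).symm : ∀ a, α.symm (R a) = R (α.symm a)),
      (fun a => (hRβs a).symm : ∀ a, β.symm (R a) = R (β.symm a))]
    rw [hRB i j x hx y hy, hRB j i _ hy' _ hx']
    simp only [map_add, map_smul, map_sub]
    module
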